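/- Let p₀ > q₀ > 0 be integers with p₀ ≥ 2 and q₀ < p₀/2 + 3/4. For the weight π(x,y) = (x−y)²(x+y)², the weighted volume of the triangle T = {(x,y) : −x ≤ y ≤ x, p₀x + q₀y ≤ 1+2p₀} equals 8(1+2p₀)⁶ / (45(p₀² − q₀²)³). -/

import Mathlib

open MeasureTheory Set

lemma hasDerivAt_poly6 (a1 a2 a3 a4 a5 a6 x : ℝ) :
    HasDerivAt (fun x : ℝ => a1*x + a2*x^2 + a3*x^3 + a4*x^4 + a5*x^5 + a6*x^6)
      (a1 + 2*a2*x + 3*a3*x^2 + 4*a4*x^3 + 5*a5*x^4 + 6*a6*x^5) x := by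
  have h := ((((((hasDerivAt_id x).const_mul a1).add
      ((hasDerivAt_pow 2 x).const_mul a2)).add
      ((hasDerivAt_pow 3 x).const_mul a3)).add
      ((hasDerivAt_pow 4 x).const_mul a4)).add
      ((hasDerivAt_pow 5 x).const_mul a5)).add
      ((hasDerivAt_pow 6 x).const_mul a6)
  refine h.congr_deriv ?_
  push_cast
  ring

lemma inner_deriv (x y : ℝ) :
    HasDerivAt (fun y : ℝ => x^4*y - 2/3*x^2*y^3 + y^5/5) ((x-y)^2*(x+y)^2) y := by
  have h := (((hasDerivAt_id y).const_mul (x^4)).sub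
      ((hasDerivAt_pow 3 y).const_mul (2/3*x^2))).add
      ((hasDerivAt_pow 5 y).div_const 5)
  refine h.congr_deriv ?_
  push_cast
  ring

lemma inner_int (x b : ℝ) (h : -x ≤ b) :
    ∫ y in Icc (-x) b, (x - y)^2 * (x + y)^2
      = (x^4*b - 2/3*x^2*b^3 + b^5/5) - (x^4*(-x) - 2/3*x^2*(-x)^3 + (-x)^5/5) := by
  rw [MeasureTheory.integral_Icc_eq_integral_Ioc, ← intervalIntegral.integral_of_le h]
  exact intervalIntegral.integral_eq_sub_of_hasDerivAt (fun y _ => inner_deriv x y)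
    (Continuous.intervalIntegrable (by continuity) _ _)

set_option maxHeartbeats 2000000 in
theorem aux (P Q : ℝ) (hQ : 0 < Q) (hPQ : Q < P) :
    ∫ p in {p : ℝ × ℝ | -p.1 ≤ p.2 ∧ p.2 ≤ p.1 ∧ P * p.1 + Q * p.2 ≤ 1 + 2 * P},
      (p.1 - p.2) ^ 2 * (p.1 + p.2) ^ 2 = 8 * (1 + 2 * P) ^ 6 / (45 * (P ^ 2 - Q ^ 2) ^ 3) := by
  have hP : 0 < P := hQ.trans hPQ
  set c : ℝ := 1 + 2 * P with hc_def
  have hc : 0 < c := by positivity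
  have hsum : 0 < P + Q := by linarith
  have hdiff : 0 < P - Q := by linarith
  set S : Set (ℝ × ℝ) := {p : ℝ × ℝ | -p.1 ≤ p.2 ∧ p.2 ≤ p.1 ∧ P * p.1 + Q * p.2 ≤ c}
    with hS_def
  set f : ℝ × ℝ → ℝ := fun p => (p.1 - p.2) ^ 2 * (p.1 + p.2) ^ 2 with hf_def
  set g : ℝ → ℝ := fun x => (c - P * x) / Q with hg_def
  set A : ℝ := c / (P + Q) with hA_def
  set B : ℝ := c / (P - Q) with hB_def
  have hA : 0 < A := div_pos hc hsum
  have hB : 0 < B := div_pos hc hdiff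
  have hAB : A ≤ B := div_le_div_of_nonneg_left hc.le hdiff (by linarith)
  have hfc : Continuous f := by fun_prop
  -- measurability of S
  have hS : MeasurableSet S := by
    have : S = {p : ℝ × ℝ | -p.1 ≤ p.2} ∩ ({p : ℝ × ℝ | p.2 ≤ p.1}
        ∩ {p : ℝ × ℝ | P * p.1 + Q * p.2 ≤ c}) := by
      ext p; simp [hS_def, and_assoc]
    rw [this]
    exact (measurableSet_le measurable_fst.neg measurable_snd).inter
      ((measurableSet_le measurable_snd measurable_fst).inter
        (measurableSet_le (by fun_prop) measurable_const))
  -- S is contained in a compact box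
  have hSsub : S ⊆ Icc 0 B ×ˢ Icc (-B) B := by
    rintro ⟨x, y⟩ ⟨h1, h2, h3⟩
    have hx0 : 0 ≤ x := by dsimp at h1 h2; linarith
    have hxB : x ≤ B := by
      rw [hB_def, le_div_iff₀ hdiff]
      dsimp at h1 h2 h3; nlinarith
    exact ⟨⟨hx0, hxB⟩, ⟨by dsimp at h1; linarith, by dsimp at h2; linarith⟩⟩
  have hint : IntegrableOn f S := by
    refine IntegrableOn.mono_set ?_ hSsub
    exact hfc.continuousOn.integrableOn_compact (isCompact_Icc.prod isCompact_Icc)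
  -- slices
  have hslice : ∀ x y : ℝ, (x, y) ∈ S ↔ y ∈ Icc (-x) (min x (g x)) := by
    intro x y
    simp only [hS_def, Set.mem_setOf_eq, Set.mem_Icc, le_min_iff, hg_def, le_div_iff₀ hQ]
    constructor
    · rintro ⟨h1, h2, h3⟩; exact ⟨h1, h2, by linarith⟩
    · rintro ⟨h1, h2, h3⟩; exact ⟨h1, h2, by linarith⟩
  -- Fubini
  have hind : Integrable (S.indicator f) (volume.prod volume) := by
    rw [← Measure.volume_eq_prod]
    exact (integrable_indicator_iff hS).2 hint
  have step1 : ∫ p in S, f p = ∫ x : ℝ, ∫ y in Icc (-x) (min x (g x)), f (x, y) := by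
    rw [← integral_indicator hS]
    rw [show (volume : Measure (ℝ × ℝ)) = volume.prod volume from Measure.volume_eq_prod ℝ ℝ]
    rw [integral_prod _ hind]
    congr 1
    funext x
    rw [← integral_indicator measurableSet_Icc]
    congr 1
    funext y
    by_cases h : y ∈ Icc (-x) (min x (g x))
    · rw [Set.indicator_of_mem ((hslice x y).2 h), Set.indicator_of_mem h]
    · rw [Set.indicator_of_notMem (fun hc => h ((hslice x y).1 hc)),
        Set.indicator_of_notMem h]
  set G : ℝ → ℝ := fun x => ∫ y in Icc (-x) (min x (g x)), f (x, y) with hG_def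
  -- G vanishes off [0, B]
  have hGzero : ∀ x : ℝ, x ∉ Icc 0 B → G x = 0 := by
    intro x hx
    have hempty : Icc (-x) (min x (g x)) = ∅ := by
      apply Icc_eq_empty
      rw [not_le]
      rcases lt_or_ge x 0 with h | h0
      · calc min x (g x) ≤ x := min_le_left _ _
          _ < -x := by linarith
      · have h : B < x := lt_of_not_ge fun hxB => hx ⟨h0, hxB⟩
        have hgx : g x < -x := by
          rw [hg_def]; dsimp only
          rw [div_lt_iff₀ hQ]
          rw [hB_def, div_lt_iff₀ hdiff] at h
          nlinarith
        calc min x (g x) ≤ g x := min_le_right _ _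
          _ < -x := hgx
    rw [hG_def]; dsimp only; rw [hempty]; simp
  have step2 : ∫ x : ℝ, G x = ∫ x in (0:ℝ)..B, G x := by
    rw [intervalIntegral.integral_of_le hB.le, ← MeasureTheory.integral_Icc_eq_integral_Ioc,
      ← integral_indicator measurableSet_Icc]
    congr 1
    funext x
    by_cases hx : x ∈ Icc (0:ℝ) B
    · rw [Set.indicator_of_mem hx]
    · rw [Set.indicator_of_notMem hx, hGzero x hx]
  -- on [0, A], G x = 16/15 x^5
  have hGA : ∀ x ∈ uIcc (0:ℝ) A, G x = 16/15 * x^5 := by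
    intro x hx
    rw [uIcc_of_le hA.le] at hx
    obtain ⟨hx0, hxA⟩ := hx
    have hmin : min x (g x) = x := by
      apply min_eq_left
      rw [hg_def]; dsimp only
      rw [le_div_iff₀ hQ]
      rw [hA_def, le_div_iff₀ hsum] at hxA
      nlinarith
    rw [hG_def]; dsimp only
    rw [hmin, hf_def]
    rw [inner_int x x (by linarith)]
    ring
  -- on [A, B], G x = F2 x
  set F2 : ℝ → ℝ := fun x =>
    (x^4*(g x) - 2/3*x^2*(g x)^3 + (g x)^5/5) - (x^4*(-x) - 2/3*x^2*(-x)^3 + (-x)^5/5)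
    with hF2_def
  have hGB : ∀ x ∈ uIcc A B, G x = F2 x := by
    intro x hx
    rw [uIcc_of_le hAB] at hx
    obtain ⟨hxA, hxB⟩ := hx
    have hmin : min x (g x) = g x := by
      apply min_eq_right
      rw [hg_def]; dsimp only
      rw [div_le_iff₀ hQ]
      rw [hA_def, div_le_iff₀ hsum] at hxA
      nlinarith
    have hneg : -x ≤ g x := by
      rw [hg_def]; dsimp only
      rw [le_div_iff₀ hQ]
      rw [hB_def, le_div_iff₀ hdiff] at hxB
      nlinarith
    rw [hG_def]; dsimp only
    rw [hmin, hf_def]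
    exact inner_int x (g x) hneg
  have hgc : Continuous g := by rw [hg_def]; fun_prop
  have hF2c : Continuous F2 := by rw [hF2_def]; fun_prop
  -- interval integrability of G on the two pieces
  have hi1 : IntervalIntegrable G volume 0 A := by
    rw [intervalIntegrable_iff]
    refine IntegrableOn.congr_fun ?_ (fun x hx => (hGA x (uIoc_subset_uIcc hx)).symm)
      measurableSet_uIoc
    exact (Continuous.integrableOn_uIoc (by fun_prop))
  have hi2 : IntervalIntegrable G volume A B := by
    rw [intervalIntegrable_iff]
    refine IntegrableOn.congr_fun ?_ (fun x hx => (hGB x (uIoc_subset_uIcc hx)).symm)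
      measurableSet_uIoc
    exact hF2c.integrableOn_uIoc
  -- compute the two pieces
  have piece1 : ∫ x in (0:ℝ)..A, G x = 8/45 * A^6 := by
    rw [intervalIntegral.integral_congr hGA]
    rw [intervalIntegral.integral_const_mul]
    rw [integral_pow]
    ring
  -- antiderivative for F2
  have hQne : Q ≠ 0 := ne_of_gt hQ
  set H : ℝ → ℝ := fun x =>
    (c^5/5*x + -(P*c^4)/2*x^2 + (2/3*P^2 - 2/9*Q^2)*c^3*x^3 + (1/2*P*Q^2 - 1/2*P^3)*c^2*x^4
      + (1/5*Q^4 - 2/5*P^2*Q^2 + 1/5*P^4)*c*x^5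
      + (4/45*Q^5 - 1/6*P*Q^4 + 1/9*P^3*Q^2 - 1/30*P^5)*x^6) / Q^5 with hH_def
  have hder : ∀ x ∈ uIcc A B, HasDerivAt H (F2 x) x := by
    intro x _
    have h := (hasDerivAt_poly6 (c^5/5) (-(P*c^4)/2) ((2/3*P^2 - 2/9*Q^2)*c^3)
      ((1/2*P*Q^2 - 1/2*P^3)*c^2) ((1/5*Q^4 - 2/5*P^2*Q^2 + 1/5*P^4)*c)
      (4/45*Q^5 - 1/6*P*Q^4 + 1/9*P^3*Q^2 - 1/30*P^5) x).div_const (Q^5)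
    refine h.congr_deriv ?_
    rw [hF2_def]; dsimp only
    rw [hg_def]; dsimp only
    field_simp
    ring
  have piece2 : ∫ x in A..B, G x = H B - H A := by
    rw [intervalIntegral.integral_congr hGB]
    exact intervalIntegral.integral_eq_sub_of_hasDerivAt hder
      (hF2c.intervalIntegrable _ _)
  -- put everything together
  rw [step1]
  rw [show integral volume G = ∫ x : ℝ, G x from rfl]
  rw [step2, ← intervalIntegral.integral_add_adjacent_intervals hi1 hi2, piece1, piece2]
  rw [hH_def]; dsimp only
  have hsumne : P + Q ≠ 0 := ne_of_gt hsum
  have hdiffne : P - Q ≠ 0 := ne_of_gt hdiff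
  rw [hA_def, hB_def, hc_def]
  have hsq : P^2 - Q^2 = (P+Q)*(P-Q) := by ring
  rw [hsq]
  field_simp
  ring

theorem stmt16 (p₀ q₀ : ℕ) (hq : 0 < q₀) (hpq : q₀ < p₀) (hp : 2 ≤ p₀)
    (hqb : (q₀ : ℝ) < p₀ / 2 + 3 / 4) :
    ∫ p in {p : ℝ × ℝ | -p.1 ≤ p.2 ∧ p.2 ≤ p.1 ∧
        (p₀ : ℝ) * p.1 + (q₀ : ℝ) * p.2 ≤ 1 + 2 * p₀},
      (p.1 - p.2) ^ 2 * (p.1 + p.2) ^ 2 =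
      8 * (1 + 2 * (p₀ : ℝ)) ^ 6 / (45 * ((p₀ : ℝ) ^ 2 - (q₀ : ℝ) ^ 2) ^ 3) := by
  exact aux p₀ q₀ (by exact_mod_cast hq) (by exact_mod_cast hpq)
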